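/- In the algebra H(w) (generated by u^μ_ν, s^μ_ν with relations Σ_λ u^μ_λ s^λ_ν = δ^μ_ν, Σ Q^λ_ν u^ρ_λ (Q^{-1})^σ_ρ s^μ_σ = δ^μ_ν, and Σ w_{λ₁...λ_m} u^{λ₁}_{μ₁}⋯u^{λ_m}_{μ_m} = w_{μ₁...μ_m}·1), the following relations hold: (a) Σ w_{μ₁...μ_m} s^{μ_m}_{ν_m} ⋯ s^{μ₁}_{ν₁} = w_{ν₁...ν_m}·1; (b) Σ_ρ s^μ_ρ u^ρ_ν = δ^μ_ν·1; (c) Σ s^λ_ν Q^τ_λ u^ρ_τ (Q^{-1})^μ_ρ = δ^μ_ν·1. -/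

import Mathlib

open MulOpposite in
private lemma aux_mat {A : Type*} [Ring A] {n : ℕ}
    (x y z : Fin n → Fin n → A)
    (hxy : ∀ μ ν, ∑ σ : Fin n, x μ σ * y σ ν = if μ = ν then (1 : A) else 0)
    (hzx : ∀ μ ν, ∑ σ : Fin n, z μ σ * x σ ν = if μ = ν then (1 : A) else 0) :
    ∀ μ ν, ∑ σ : Fin n, y μ σ * x σ ν = if μ = ν then (1 : A) else 0 := by
  have hX : (Matrix.of x) * (Matrix.of y) = 1 := by
    ext μ ν; rw [Matrix.mul_apply, Matrix.one_apply]; exact hxy μ ν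
  have hZ : (Matrix.of z) * (Matrix.of x) = 1 := by
    ext μ ν; rw [Matrix.mul_apply, Matrix.one_apply]; exact hzx μ ν
  have hzy : Matrix.of z = Matrix.of y := left_inv_eq_right_inv hZ hX
  have hYX : (Matrix.of y) * (Matrix.of x) = 1 := hzy ▸ hZ
  intro μ ν
  have := congrArg (fun M : Matrix (Fin n) (Fin n) A => M μ ν) hYX
  simpa [Matrix.mul_apply, Matrix.one_apply] using this

open MulOpposite in
private lemma aux_flop {A : Type*} [Ring A] {n : ℕ}
    (x y z : Fin n → Fin n → A)
    (hxy : ∀ μ ν, ∑ σ : Fin n, x σ ν * y μ σ = if μ = ν then (1 : A) else 0)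
    (hzy : ∀ μ ν, ∑ σ : Fin n, y σ ν * z μ σ = if μ = ν then (1 : A) else 0) :
    ∀ μ ν, ∑ σ : Fin n, y σ ν * x μ σ = if μ = ν then (1 : A) else 0 := by
  have key : ∀ p q : Fin n → Fin n → A,
      (∀ μ ν, ∑ σ : Fin n, q σ ν * p μ σ = if μ = ν then (1 : A) else 0) →
      ∀ μ ν, ∑ σ : Fin n, (fun a b => op (p a b)) μ σ * (fun a b => op (q a b)) σ ν
        = if μ = ν then (1 : Aᵐᵒᵖ) else 0 := by
    intro p q h μ ν
    simp only []
    have : ∑ σ : Fin n, op (p μ σ) * op (q σ ν) = op (∑ σ : Fin n, q σ ν * p μ σ) := by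
      rw [Finset.op_sum]; exact Finset.sum_congr rfl fun σ _ => (op_mul _ _).symm
    rw [this, h μ ν]
    split <;> simp
  have h1 := key y x hxy
  have h2 := key z y hzy
  have h3 := aux_mat (fun a b => op (y a b)) (fun a b => op (x a b)) (fun a b => op (z a b)) h1 h2
  intro μ ν
  have := h3 μ ν
  have : op (∑ σ : Fin n, y σ ν * x μ σ) = op (if μ = ν then (1 : A) else 0) := by
    rw [Finset.op_sum]
    refine Eq.trans ?_ (this.trans ?_)
    · exact Finset.sum_congr rfl fun σ _ => op_mul _ _
    · split <;> simp
  exact op_injective this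

private lemma aux_tele {A : Type*} [Ring A] {n : ℕ}
    (u s : Fin n → Fin n → A)
    (hus : ∀ μ ν, ∑ lam : Fin n, u μ lam * s lam ν = if μ = ν then (1 : A) else 0) :
    ∀ (M : ℕ) (a c : Fin M → Fin n),
      ∑ b : Fin M → Fin n,
        (List.ofFn fun i => u (a i) (b i)).prod *
          (List.ofFn fun i => s (b (Fin.rev i)) (c (Fin.rev i))).prod
        = if a = c then (1 : A) else 0 := by
  intro M
  induction M with
  | zero =>
    intro a c
    have hac : a = c := funext fun i => i.elim0
    simp [hac]
  | succ M ih =>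
    intro a c
    have hre : (∑ b : Fin (M + 1) → Fin n,
          (List.ofFn fun i => u (a i) (b i)).prod *
            (List.ofFn fun i => s (b (Fin.rev i)) (c (Fin.rev i))).prod)
        = ∑ β : Fin n, ∑ b' : Fin M → Fin n,
            (List.ofFn fun i : Fin (M + 1) => u (a i) ((Fin.cons β b' : Fin (M + 1) → Fin n) i)).prod *
              (List.ofFn fun i : Fin (M + 1) =>
                s ((Fin.cons β b' : Fin (M + 1) → Fin n) (Fin.rev i)) (c (Fin.rev i))).prod := by
      refine Eq.trans ((Fintype.sum_equiv (Fin.consEquiv fun _ => Fin n)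
        (fun p : Fin n × (Fin M → Fin n) =>
          (List.ofFn fun i : Fin (M + 1) =>
            u (a i) ((Fin.cons p.1 p.2 : Fin (M + 1) → Fin n) i)).prod *
          (List.ofFn fun i : Fin (M + 1) =>
            s ((Fin.cons p.1 p.2 : Fin (M + 1) → Fin n) (Fin.rev i)) (c (Fin.rev i))).prod)
        _ fun p => rfl).symm) ?_
      exact Fintype.sum_prod_type _
    rw [hre]
    have e1 : ∀ (β : Fin n) (b' : Fin M → Fin n),
        (List.ofFn fun i : Fin (M + 1) => u (a i) ((Fin.cons β b' : Fin (M + 1) → Fin n) i)).prod *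
          (List.ofFn fun i : Fin (M + 1) =>
            s ((Fin.cons β b' : Fin (M + 1) → Fin n) (Fin.rev i)) (c (Fin.rev i))).prod
        = u (a 0) β *
            (((List.ofFn fun i : Fin M => u (a i.succ) (b' i)).prod *
              (List.ofFn fun i : Fin M => s (b' (Fin.rev i)) (c (Fin.rev i).succ)).prod) *
             s β (c 0)) := by
      intro β b'
      rw [List.ofFn_succ (f := fun i : Fin (M + 1) => u (a i) ((Fin.cons β b' : Fin (M + 1) → Fin n) i)),
        List.ofFn_succ' (f := fun i : Fin (M + 1) => s ((Fin.cons β b' : Fin (M + 1) → Fin n) (Fin.rev i)) (c (Fin.rev i)))]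
      simp only [Fin.cons_zero, Fin.cons_succ, Fin.rev_last, Fin.rev_castSucc,
        List.prod_cons, List.prod_concat]
      simp only [mul_assoc]
    simp only [e1]
    have ihs := ih (fun i => a i.succ) (fun i => c i.succ)
    have e2 : ∀ β : Fin n,
        (∑ b' : Fin M → Fin n, u (a 0) β *
          (((List.ofFn fun i : Fin M => u (a i.succ) (b' i)).prod *
            (List.ofFn fun i : Fin M => s (b' (Fin.rev i)) (c (Fin.rev i).succ)).prod) *
           s β (c 0)))
        = u (a 0) β * ((if (fun i : Fin M => a i.succ) = (fun i : Fin M => c i.succ) then (1 : A) else 0)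
            * s β (c 0)) := by
      intro β
      rw [← Finset.mul_sum, ← Finset.sum_mul, ihs]
    simp only [e2]
    by_cases h : (fun i : Fin M => a i.succ) = (fun i : Fin M => c i.succ)
    · have hiff : (a 0 = c 0) ↔ (a = c) := by
        constructor
        · intro h0
          funext i
          cases i using Fin.cases with
          | zero => exact h0
          | succ j => exact congrFun h j
        · intro h'; rw [h']
      rw [if_pos h]
      simp only [one_mul]
      rw [hus (a 0) (c 0), if_congr hiff rfl rfl]
    · have h2 : a ≠ c := fun hac => h (by rw [hac])
      simp [h, h2]


/-- Proposition 5.1: In any algebra with elements `u^μ_ν`, `s^μ_ν`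
satisfying the defining relations of `H(w)` for a preregular form `w` (components
`wc`, twisting matrix `Q` with inverse `Qi`), one has
(a) `Σ w_{μ₁…μ_M} s^{μ_M}_{ν_M} ⋯ s^{μ₁}_{ν₁} = w_{ν₁…ν_M}·1`,
(b) `Σ_ρ s^μ_ρ u^ρ_ν = δ^μ_ν·1`,
(c) `Σ s^λ_ν Q^τ_λ u^ρ_τ (Q⁻¹)^μ_ρ = δ^μ_ν·1`. -/
theorem stmt_12 {K A : Type*} [Field K] [Ring A] [Algebra K A]
    {n m : ℕ} (hn : 2 ≤ n) (hm : 1 ≤ m)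
    (wc : (Fin (m + 1) → Fin n) → K) (Q Qi : Matrix (Fin n) (Fin n) K)
    (hQQi : Q * Qi = 1) (hQiQ : Qi * Q = 1)
    (hcyc : ∀ ls : Fin (m + 1) → Fin n,
      wc ls = ∑ lam : Fin n, Q lam (ls (Fin.last m)) * wc (Fin.cons lam (Fin.init ls)))
    (hwt : ∃ wt : (Fin (m + 1) → Fin n) → K, ∀ μ ν : Fin n,
      ∑ l : Fin m → Fin n, wt (Fin.cons μ l) * wc (Fin.snoc l ν)
        = if μ = ν then 1 else 0)
    (u s : Fin n → Fin n → A)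
    (hus : ∀ μ ν : Fin n,
      ∑ lam : Fin n, u μ lam * s lam ν = if μ = ν then (1 : A) else 0)
    (htus : ∀ μ ν : Fin n,
      ∑ lam : Fin n, ∑ ρ : Fin n, ∑ σ : Fin n,
        (Q lam ν * Qi σ ρ) • (u ρ lam * s μ σ) = if μ = ν then (1 : A) else 0)
    (hinvw : ∀ μs : Fin (m + 1) → Fin n,
      ∑ ls : Fin (m + 1) → Fin n,
        wc ls • (List.ofFn fun i => u (ls i) (μs i)).prod = wc μs • (1 : A)) :
    (∀ νs : Fin (m + 1) → Fin n,
      ∑ μs : Fin (m + 1) → Fin n,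
        wc μs • (List.ofFn fun i => s (μs (Fin.rev i)) (νs (Fin.rev i))).prod
          = wc νs • (1 : A)) ∧
    (∀ μ ν : Fin n,
      ∑ ρ : Fin n, s μ ρ * u ρ ν = if μ = ν then (1 : A) else 0) ∧
    (∀ μ ν : Fin n,
      ∑ lam : Fin n, ∑ τ : Fin n, ∑ ρ : Fin n,
        (Q τ lam * Qi μ ρ) • (s lam ν * u ρ τ) = if μ = ν then (1 : A) else 0) := by
  classical
  obtain ⟨wt, hwt⟩ := hwt
  -- reindex sums over (m+1)-tuples using `Fin.snoc`
  have hsum : ∀ g : (Fin (m + 1) → Fin n) → A,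
      ∑ ls : Fin (m + 1) → Fin n, g ls
        = ∑ lam : Fin n, ∑ l : Fin m → Fin n, g (Fin.snoc l lam) := by
    intro g
    refine Eq.trans ((Fintype.sum_equiv (Fin.snocEquiv fun _ => Fin n)
      (fun p : Fin n × (Fin m → Fin n) => g (Fin.snoc p.2 p.1)) g fun p => rfl).symm) ?_
    exact Fintype.sum_prod_type _
  -- splitting the u-products
  have hUsplit : ∀ (l : Fin m → Fin n) (lam : Fin n) (k : Fin m → Fin n) (ν : Fin n),
      (List.ofFn fun i : Fin (m + 1) =>
          u ((Fin.snoc l lam : Fin (m + 1) → Fin n) i)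
            ((Fin.snoc k ν : Fin (m + 1) → Fin n) i)).prod
        = (List.ofFn fun i : Fin m => u (l i) (k i)).prod * u lam ν := by
    intro l lam k ν
    rw [List.ofFn_succ' (f := fun i : Fin (m + 1) =>
      u ((Fin.snoc l lam : Fin (m + 1) → Fin n) i) ((Fin.snoc k ν : Fin (m + 1) → Fin n) i))]
    simp [Fin.snoc_castSucc, Fin.snoc_last]
  -- splitting the reversed s-products
  have hSsplit : ∀ (r : Fin m → Fin n) (lam : Fin n) (k : Fin m → Fin n) (ν : Fin n),
      (List.ofFn fun i : Fin (m + 1) =>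
          s ((Fin.snoc r lam : Fin (m + 1) → Fin n) (Fin.rev i))
            ((Fin.snoc k ν : Fin (m + 1) → Fin n) (Fin.rev i))).prod
        = s lam ν * (List.ofFn fun i : Fin m => s (r (Fin.rev i)) (k (Fin.rev i))).prod := by
    intro r lam k ν
    rw [List.ofFn_succ (f := fun i : Fin (m + 1) =>
      s ((Fin.snoc r lam : Fin (m + 1) → Fin n) (Fin.rev i))
        ((Fin.snoc k ν : Fin (m + 1) → Fin n) (Fin.rev i)))]
    simp [Fin.rev_zero, Fin.rev_succ, Fin.snoc_last, Fin.snoc_castSucc]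
  -- part (a)
  have ha : ∀ νs : Fin (m + 1) → Fin n,
      ∑ μs : Fin (m + 1) → Fin n,
        wc μs • (List.ofFn fun i => s (μs (Fin.rev i)) (νs (Fin.rev i))).prod
          = wc νs • (1 : A) := by
    intro νs
    calc
      ∑ μs : Fin (m + 1) → Fin n,
          wc μs • (List.ofFn fun i => s (μs (Fin.rev i)) (νs (Fin.rev i))).prod
        = ∑ μs : Fin (m + 1) → Fin n, ∑ ls : Fin (m + 1) → Fin n,
            wc ls • ((List.ofFn fun i => u (ls i) (μs i)).prod *
              (List.ofFn fun i => s (μs (Fin.rev i)) (νs (Fin.rev i))).prod) := by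
          refine Finset.sum_congr rfl fun μs _ => ?_
          rw [show wc μs • (List.ofFn fun i => s (μs (Fin.rev i)) (νs (Fin.rev i))).prod
              = (wc μs • (1 : A)) *
                (List.ofFn fun i => s (μs (Fin.rev i)) (νs (Fin.rev i))).prod by
            rw [smul_mul_assoc, one_mul]]
          rw [← hinvw μs, Finset.sum_mul]
          exact Finset.sum_congr rfl fun ls _ => smul_mul_assoc _ _ _
      _ = ∑ ls : Fin (m + 1) → Fin n, wc ls •
            ∑ μs : Fin (m + 1) → Fin n,
              ((List.ofFn fun i => u (ls i) (μs i)).prod *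
               (List.ofFn fun i => s (μs (Fin.rev i)) (νs (Fin.rev i))).prod) := by
          rw [Finset.sum_comm]
          exact Finset.sum_congr rfl fun ls _ => (Finset.smul_sum).symm
      _ = ∑ ls : Fin (m + 1) → Fin n, wc ls • (if ls = νs then (1 : A) else 0) := by
          exact Finset.sum_congr rfl fun ls _ => by rw [aux_tele u s hus (m + 1) ls νs]
      _ = wc νs • (1 : A) := by
          have h1 : ∀ ls : Fin (m + 1) → Fin n,
              wc ls • (if ls = νs then (1 : A) else 0)
                = if ls = νs then wc ls • (1 : A) else 0 := by
            intro ls; split <;> simp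
          rw [Finset.sum_congr rfl fun ls _ => h1 ls,
            Finset.sum_ite_eq' Finset.univ νs fun ls => wc ls • (1 : A)]
          simp
  refine ⟨ha, ?_, ?_⟩
  -- part (b)
  · have ht : ∀ μ ν : Fin n,
        ∑ lam : Fin n,
          (∑ k : Fin m → Fin n, ∑ l : Fin m → Fin n,
            (wt (Fin.cons μ k) * wc (Fin.snoc l lam)) •
              (List.ofFn fun i : Fin m => u (l i) (k i)).prod) * u lam ν
          = if μ = ν then (1 : A) else 0 := by
      intro μ ν
      calc
        ∑ lam : Fin n,
            (∑ k : Fin m → Fin n, ∑ l : Fin m → Fin n,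
              (wt (Fin.cons μ k) * wc (Fin.snoc l lam)) •
                (List.ofFn fun i : Fin m => u (l i) (k i)).prod) * u lam ν
          = ∑ lam : Fin n, ∑ k : Fin m → Fin n, ∑ l : Fin m → Fin n,
              wt (Fin.cons μ k) • (wc (Fin.snoc l lam) •
                ((List.ofFn fun i : Fin m => u (l i) (k i)).prod * u lam ν)) := by
            refine Finset.sum_congr rfl fun lam _ => ?_
            rw [Finset.sum_mul]
            refine Finset.sum_congr rfl fun k _ => ?_
            rw [Finset.sum_mul]
            refine Finset.sum_congr rfl fun l _ => ?_
            rw [smul_mul_assoc, mul_smul]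
        _ = ∑ k : Fin m → Fin n, wt (Fin.cons μ k) •
              ∑ lam : Fin n, ∑ l : Fin m → Fin n, wc (Fin.snoc l lam) •
                ((List.ofFn fun i : Fin m => u (l i) (k i)).prod * u lam ν) := by
            rw [Finset.sum_comm]
            refine Finset.sum_congr rfl fun k _ => ?_
            rw [Finset.smul_sum]
            exact Finset.sum_congr rfl fun lam _ => (Finset.smul_sum).symm
        _ = ∑ k : Fin m → Fin n, wt (Fin.cons μ k) • (wc (Fin.snoc k ν) • (1 : A)) := by
            refine Finset.sum_congr rfl fun k _ => ?_
            congr 1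
            have key := hsum (fun ls => wc ls •
              (List.ofFn fun i => u (ls i) ((Fin.snoc k ν : Fin (m + 1) → Fin n) i)).prod)
            rw [hinvw (Fin.snoc k ν)] at key
            rw [key]
            exact Finset.sum_congr rfl fun lam _ => Finset.sum_congr rfl fun l _ => by
              rw [hUsplit l lam k ν]
        _ = (∑ k : Fin m → Fin n, wt (Fin.cons μ k) * wc (Fin.snoc k ν)) • (1 : A) := by
            rw [Finset.sum_smul]
            exact Finset.sum_congr rfl fun k _ => (smul_smul _ _ _)
        _ = if μ = ν then (1 : A) else 0 := by
            rw [hwt μ ν]; split <;> simp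
    exact aux_mat u s
      (fun μ lam => ∑ k : Fin m → Fin n, ∑ l : Fin m → Fin n,
        (wt (Fin.cons μ k) * wc (Fin.snoc l lam)) •
          (List.ofFn fun i : Fin m => u (l i) (k i)).prod) hus ht
  -- part (c)
  · have hsf : ∀ μ ν : Fin n,
        ∑ lam : Fin n, s lam ν *
          (∑ k : Fin m → Fin n, ∑ r : Fin m → Fin n,
            (wt (Fin.cons μ k) * wc (Fin.snoc r lam)) •
              (List.ofFn fun i : Fin m => s (r (Fin.rev i)) (k (Fin.rev i))).prod)
          = if μ = ν then (1 : A) else 0 := by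
      intro μ ν
      have step2 : ∀ k : Fin m → Fin n,
          wc (Fin.snoc k ν) • (1 : A)
            = ∑ lam : Fin n, ∑ r : Fin m → Fin n, wc (Fin.snoc r lam) •
                (s lam ν *
                  (List.ofFn fun i : Fin m => s (r (Fin.rev i)) (k (Fin.rev i))).prod) := by
        intro k
        have key := hsum (fun μs => wc μs •
          (List.ofFn fun i => s (μs (Fin.rev i))
            ((Fin.snoc k ν : Fin (m + 1) → Fin n) (Fin.rev i))).prod)
        rw [ha (Fin.snoc k ν)] at key
        rw [key]
        exact Finset.sum_congr rfl fun lam _ => Finset.sum_congr rfl fun r _ => by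
          rw [hSsplit r lam k ν]
      calc
        ∑ lam : Fin n, s lam ν *
            (∑ k : Fin m → Fin n, ∑ r : Fin m → Fin n,
              (wt (Fin.cons μ k) * wc (Fin.snoc r lam)) •
                (List.ofFn fun i : Fin m => s (r (Fin.rev i)) (k (Fin.rev i))).prod)
          = ∑ lam : Fin n, ∑ k : Fin m → Fin n, ∑ r : Fin m → Fin n,
              wt (Fin.cons μ k) • (wc (Fin.snoc r lam) •
                (s lam ν *
                  (List.ofFn fun i : Fin m => s (r (Fin.rev i)) (k (Fin.rev i))).prod)) := by
            refine Finset.sum_congr rfl fun lam _ => ?_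
            rw [Finset.mul_sum]
            refine Finset.sum_congr rfl fun k _ => ?_
            rw [Finset.mul_sum]
            refine Finset.sum_congr rfl fun r _ => ?_
            rw [mul_smul_comm, mul_smul]
        _ = ∑ k : Fin m → Fin n, wt (Fin.cons μ k) •
              ∑ lam : Fin n, ∑ r : Fin m → Fin n, wc (Fin.snoc r lam) •
                (s lam ν *
                  (List.ofFn fun i : Fin m => s (r (Fin.rev i)) (k (Fin.rev i))).prod) := by
            rw [Finset.sum_comm]
            refine Finset.sum_congr rfl fun k _ => ?_
            rw [Finset.smul_sum]
            exact Finset.sum_congr rfl fun lam _ => (Finset.smul_sum).symm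
        _ = ∑ k : Fin m → Fin n, wt (Fin.cons μ k) • (wc (Fin.snoc k ν) • (1 : A)) := by
            exact Finset.sum_congr rfl fun k _ => by rw [← step2 k]
        _ = (∑ k : Fin m → Fin n, wt (Fin.cons μ k) * wc (Fin.snoc k ν)) • (1 : A) := by
            rw [Finset.sum_smul]
            exact Finset.sum_congr rfl fun k _ => (smul_smul _ _ _)
        _ = if μ = ν then (1 : A) else 0 := by
            rw [hwt μ ν]; split <;> simp
    have hcs : ∀ μ ν : Fin n,
        ∑ σ : Fin n,
          (∑ lam : Fin n, ∑ ρ : Fin n, (Q lam ν * Qi σ ρ) • u ρ lam) * s μ σ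
          = if μ = ν then (1 : A) else 0 := by
      intro μ ν
      calc
        ∑ σ : Fin n, (∑ lam : Fin n, ∑ ρ : Fin n, (Q lam ν * Qi σ ρ) • u ρ lam) * s μ σ
          = ∑ σ : Fin n, ∑ lam : Fin n, ∑ ρ : Fin n,
              (Q lam ν * Qi σ ρ) • (u ρ lam * s μ σ) := by
            refine Finset.sum_congr rfl fun σ _ => ?_
            rw [Finset.sum_mul]
            refine Finset.sum_congr rfl fun lam _ => ?_
            rw [Finset.sum_mul]
            exact Finset.sum_congr rfl fun ρ _ => smul_mul_assoc _ _ _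
        _ = ∑ lam : Fin n, ∑ σ : Fin n, ∑ ρ : Fin n,
              (Q lam ν * Qi σ ρ) • (u ρ lam * s μ σ) := Finset.sum_comm
        _ = ∑ lam : Fin n, ∑ ρ : Fin n, ∑ σ : Fin n,
              (Q lam ν * Qi σ ρ) • (u ρ lam * s μ σ) :=
            Finset.sum_congr rfl fun lam _ => Finset.sum_comm
        _ = if μ = ν then (1 : A) else 0 := htus μ ν
    have hc := aux_flop
      (fun σ ν => ∑ lam : Fin n, ∑ ρ : Fin n, (Q lam ν * Qi σ ρ) • u ρ lam) s
      (fun μ lam => ∑ k : Fin m → Fin n, ∑ r : Fin m → Fin n,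
        (wt (Fin.cons μ k) * wc (Fin.snoc r lam)) •
          (List.ofFn fun i : Fin m => s (r (Fin.rev i)) (k (Fin.rev i))).prod)
      hcs hsf
    intro μ ν
    calc
      ∑ lam : Fin n, ∑ τ : Fin n, ∑ ρ : Fin n,
          (Q τ lam * Qi μ ρ) • (s lam ν * u ρ τ)
        = ∑ lam : Fin n, s lam ν *
            (∑ τ : Fin n, ∑ ρ : Fin n, (Q τ lam * Qi μ ρ) • u ρ τ) := by
          refine Finset.sum_congr rfl fun lam _ => ?_
          rw [Finset.mul_sum]
          refine Finset.sum_congr rfl fun τ _ => ?_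
          rw [Finset.mul_sum]
          exact Finset.sum_congr rfl fun ρ _ => (mul_smul_comm _ _ _).symm
      _ = if μ = ν then (1 : A) else 0 := hc μ ν
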